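/- arXiv:1810.05957 — 3 statements merged into one kernel-verified Lean document; each statement's English description precedes it below -/
import Mathlib

section
/- Let Y be a (1−2ε)-uniform approximate transportation matrix from p to q with residuals p' = (I − diag(Yᵀ𝟙))p and q' = q − Yp, and suppose α := ⟨𝟙, q'⟩ > 0. Let Z ∈ ℝ^{k×ℓ} have every column equal to q'/α, and set Z' = Z(I − diag(Yᵀ𝟙)). Then Y + Z' is a transportation matrix from p to q: (Y+Z')p = q and (Y+Z')ᵀ𝟙 = 𝟙. -/
/-- Repairing a `(1−2ε)`-uniform approximate transportation matrix `Y` by the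
oblivious scheme on the residuals yields an exact transportation matrix:
with `q' = q − Yp`, `α = ⟨𝟙,q'⟩ > 0`, `Z` the matrix with every column `q'/α`,
and `Z' = Z(I − diag(Yᵀ𝟙))`, the matrix `Y + Z'` satisfies `(Y+Z')p = q` and
`(Y+Z')ᵀ𝟙 = 𝟙` and is nonnegative. -/
theorem repair_uniform_transport (k ℓ : ℕ)
    (p : Fin ℓ → ℝ) (q : Fin k → ℝ)
    (hp : ∀ j, 0 ≤ p j) (hp1 : ∑ j, p j = 1)
    (hq : ∀ i, 0 ≤ q i) (hq1 : ∑ i, q i = 1)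
    (ε : ℝ) (hε0 : 0 < ε) (hε1 : ε < 1 / 2)
    (Y : Matrix (Fin k) (Fin ℓ) ℝ)
    (hYpos : ∀ i j, 0 ≤ Y i j)
    (hYp_lo : ∀ i, (1 - 2 * ε) * q i ≤ ∑ j, Y i j * p j)
    (hYp_hi : ∀ i, ∑ j, Y i j * p j ≤ q i)
    (hYt_lo : ∀ j, 1 - 2 * ε ≤ ∑ i, Y i j)
    (hYt_hi : ∀ j, ∑ i, Y i j ≤ 1)
    (α : ℝ) (hα : α = ∑ i, (q i - ∑ j, Y i j * p j)) (hαpos : 0 < α)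
    (Z Z' : Matrix (Fin k) (Fin ℓ) ℝ)
    (hZ : ∀ i j, Z i j = (q i - ∑ j', Y i j' * p j') / α)
    (hZ' : ∀ i j, Z' i j = Z i j * (1 - ∑ i', Y i' j)) :
    (∀ i j, 0 ≤ Y i j + Z' i j) ∧
    (∀ i, ∑ j, (Y i j + Z' i j) * p j = q i) ∧
    (∀ j, ∑ i, (Y i j + Z' i j) = 1) := by
  have key : ∑ j, (1 - ∑ i', Y i' j) * p j = α := by
    rw [hα]
    have h1 : ∑ j, (1 - ∑ i', Y i' j) * p j
        = (∑ j, p j) - ∑ j, (∑ i', Y i' j) * p j := by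
      rw [← Finset.sum_sub_distrib]; congr 1; ext j; ring
    have h2 : ∑ i, (q i - ∑ j, Y i j * p j)
        = (∑ i, q i) - ∑ i, ∑ j, Y i j * p j := by
      rw [Finset.sum_sub_distrib]
    rw [h1, h2, hp1, hq1]
    congr 1
    rw [Finset.sum_comm]
    congr 1; ext j
    rw [Finset.sum_mul]
  refine ⟨?_, ?_, ?_⟩
  · intro i j
    have h1 : 0 ≤ Z' i j := by
      rw [hZ' i j, hZ i j]
      apply mul_nonneg (div_nonneg (by linarith [hYp_hi i]) hαpos.le)
      linarith [hYt_hi j]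
    linarith [hYpos i j]
  · intro i
    have h1 : ∑ j, (Y i j + Z' i j) * p j
        = (∑ j, Y i j * p j) + (q i - ∑ j', Y i j' * p j') / α * ∑ j, (1 - ∑ i', Y i' j) * p j := by
      rw [Finset.mul_sum, ← Finset.sum_add_distrib]
      congr 1; ext j
      rw [hZ' i j, hZ i j]; ring
    rw [h1, key]
    field_simp
    ring
  · intro j
    have h1 : ∑ i, (Y i j + Z' i j)
        = (∑ i, Y i j) + (1 - ∑ i', Y i' j) / α * ∑ i, (q i - ∑ j', Y i j' * p j') := by
      rw [Finset.mul_sum, ← Finset.sum_add_distrib]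
      congr 1; ext i
      rw [hZ' i j, hZ i j]; ring
    rw [h1, ← hα]
    field_simp
    ring
end

section
/- Let X be a (1−ε)-transportation matrix from p to q with residual mass α = ⟨𝟙, q − Xp⟩ > 0. With p' = (I − diag(Xᵀ𝟙))p, q' = q − Xp, Y the matrix with every column q'/α, and Y' = Y(I − diag(Xᵀ𝟙)), the matrix X + Y' is a transportation matrix from p to q, and the cost of Y' satisfies Σ_{i,j} C_{ij} Y'_{ij} p_j = (1/α)⟨C q', p'⟩ ≤ α‖C‖_∞ ≤ ε‖C‖_∞. -/
/-- Repairing a `(1−ε)`-transportation matrix `X` with the oblivious scheme on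
the residuals yields an exact transportation matrix `X + Y'`, and the added
cost satisfies `∑ᵢⱼ Cᵢⱼ Y'ᵢⱼ pⱼ = (1/α)⟨Cq',p'⟩ ≤ α‖C‖_∞ ≤ ε‖C‖_∞`. -/
theorem repair_packing_transport (k ℓ : ℕ) [NeZero k] [NeZero ℓ]
    (p : Fin ℓ → ℝ) (q : Fin k → ℝ) (C : Matrix (Fin k) (Fin ℓ) ℝ)
    (hp : ∀ j, 0 ≤ p j) (hp1 : ∑ j, p j = 1)
    (hq : ∀ i, 0 ≤ q i) (hq1 : ∑ i, q i = 1)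
    (hC : ∀ i j, 0 ≤ C i j)
    (ε : ℝ) (hε0 : 0 < ε) (hε1 : ε ≤ 1)
    (X : Matrix (Fin k) (Fin ℓ) ℝ)
    (hXpos : ∀ i j, 0 ≤ X i j)
    (hXp : ∀ i, ∑ j, X i j * p j ≤ q i)
    (hXt : ∀ j, ∑ i, X i j ≤ 1)
    (hmass : 1 - ε ≤ ∑ i, ∑ j, X i j * p j)
    (p' : Fin ℓ → ℝ) (hp' : ∀ j, p' j = (1 - ∑ i, X i j) * p j)
    (q' : Fin k → ℝ) (hq' : ∀ i, q' i = q i - ∑ j, X i j * p j)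
    (α : ℝ) (hα : α = ∑ i, q' i) (hαpos : 0 < α)
    (Y Y' : Matrix (Fin k) (Fin ℓ) ℝ)
    (hY : ∀ i j, Y i j = q' i / α)
    (hY' : ∀ i j, Y' i j = Y i j * (1 - ∑ i', X i' j)) :
    (∀ i j, 0 ≤ X i j + Y' i j) ∧
    (∀ i, ∑ j, (X i j + Y' i j) * p j = q i) ∧
    (∀ j, ∑ i, (X i j + Y' i j) = 1) ∧
    (∑ i, ∑ j, C i j * Y' i j * p j = (1 / α) * ∑ i, ∑ j, C i j * q' i * p' j) ∧
    (∑ i, ∑ j, C i j * Y' i j * p j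
      ≤ α * Finset.univ.sup' Finset.univ_nonempty
          (fun i : Fin k => Finset.univ.sup' Finset.univ_nonempty (fun j => C i j))) ∧
    (α * Finset.univ.sup' Finset.univ_nonempty
          (fun i : Fin k => Finset.univ.sup' Finset.univ_nonempty (fun j => C i j))
      ≤ ε * Finset.univ.sup' Finset.univ_nonempty
          (fun i : Fin k => Finset.univ.sup' Finset.univ_nonempty (fun j => C i j))) := by
  set M := Finset.univ.sup' Finset.univ_nonempty
      (fun i : Fin k => Finset.univ.sup' Finset.univ_nonempty (fun j => C i j)) with hMdef
  have hq'pos : ∀ i, 0 ≤ q' i := fun i => by rw [hq' i]; linarith [hXp i]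
  have hcol : ∀ j, 0 ≤ 1 - ∑ i, X i j := fun j => by linarith [hXt j]
  have hp'pos : ∀ j, 0 ≤ p' j := fun j => by
    rw [hp' j]; exact mul_nonneg (hcol j) (hp j)
  have hsumq' : ∑ i, q' i = α := hα.symm
  have hαval : α = 1 - ∑ i, ∑ j, X i j * p j := by
    rw [hα]
    simp only [hq']
    rw [Finset.sum_sub_distrib, hq1]
  have hsump' : ∑ j, p' j = α := by
    simp only [hp', sub_mul, one_mul]
    rw [Finset.sum_sub_distrib, hp1, hαval, Finset.sum_comm]
    congr 1
    exact Finset.sum_congr rfl fun j _ => Finset.sum_mul Finset.univ (fun i => X i j) (p j)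
  have hM : ∀ i j, C i j ≤ M := fun i j =>
    le_trans (Finset.le_sup' _ (Finset.mem_univ j)) (Finset.le_sup' (fun i => Finset.univ.sup' Finset.univ_nonempty fun j => C i j) (Finset.mem_univ i))
  have hM0 : 0 ≤ M := le_trans (hC 0 0) (hM 0 0)
  have hαε : α ≤ ε := by rw [hαval]; linarith
  have h4 : ∑ i, ∑ j, C i j * Y' i j * p j
      = (1 / α) * ∑ i, ∑ j, C i j * q' i * p' j := by
    rw [Finset.mul_sum]
    refine Finset.sum_congr rfl fun i _ => ?_
    rw [Finset.mul_sum]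
    refine Finset.sum_congr rfl fun j _ => ?_
    rw [hY' i j, hY i j, hp' j]
    field_simp
  refine ⟨?_, ?_, ?_, h4, ?_, ?_⟩
  · intro i j
    have h1 := mul_nonneg (div_nonneg (hq'pos i) hαpos.le) (hcol j)
    rw [hY' i j, hY i j]
    linarith [hXpos i j]
  · intro i
    have h2 : ∑ j, Y' i j * p j = q' i := by
      have : ∀ j, Y' i j * p j = q' i / α * p' j := fun j => by
        rw [hY' i j, hY i j, hp' j]; ring
      rw [Finset.sum_congr rfl fun j _ => this j, ← Finset.mul_sum, hsump']
      field_simp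
    simp only [add_mul, Finset.sum_add_distrib, h2]
    rw [hq' i]; ring
  · intro j
    have h3 : ∑ i, Y' i j = 1 - ∑ i, X i j := by
      have : ∀ i, Y' i j = q' i * ((1 - ∑ i', X i' j) / α) := fun i => by
        rw [hY' i j, hY i j]; ring
      rw [Finset.sum_congr rfl fun i _ => this i, ← Finset.sum_mul, hsumq']
      field_simp
    rw [Finset.sum_add_distrib, h3]; ring
  · rw [h4]
    have hbound : ∑ i, ∑ j, C i j * q' i * p' j ≤ M * α * α := by
      calc ∑ i, ∑ j, C i j * q' i * p' j ≤ ∑ i, ∑ j, M * q' i * p' j := by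
            refine Finset.sum_le_sum fun i _ => Finset.sum_le_sum fun j _ => ?_
            have h := mul_nonneg (hq'pos i) (hp'pos j)
            nlinarith [hM i j]
        _ = M * α * α := by
            have : ∀ i, ∑ j, M * q' i * p' j = M * q' i * α := fun i => by
              rw [← Finset.mul_sum, hsump']
            rw [Finset.sum_congr rfl fun i _ => this i, ← Finset.sum_mul,
              ← Finset.mul_sum, hsumq']
    have heq : (1 / α) * (M * α * α) = α * M := by field_simp
    have := mul_le_mul_of_nonneg_left hbound (by positivity : (0:ℝ) ≤ 1 / α)
    linarith
  · exact mul_le_mul_of_nonneg_right hαε hM0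
end

section
/- Given a (1−ε)-transportation matrix X from p to q with cost at most OPT + δ/2, where ε = δ/(2‖C‖_∞), there exists a transportation matrix U from p to q with cost at most OPT + δ. -/
/-- Given a `(1−ε)`-transportation matrix `X` with cost at most `OPT + δ/2`,
where `ε = δ/(2‖C‖_∞)`, there is an exact transportation matrix `U` with cost
at most `OPT + δ`. -/
theorem fix_packing_transport (k ℓ : ℕ) [NeZero k] [NeZero ℓ]
    (p : Fin ℓ → ℝ) (q : Fin k → ℝ) (C : Matrix (Fin k) (Fin ℓ) ℝ)
    (hp : ∀ j, 0 ≤ p j) (hp1 : ∑ j, p j = 1)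
    (hq : ∀ i, 0 ≤ q i) (hq1 : ∑ i, q i = 1)
    (hC : ∀ i j, 0 ≤ C i j)
    (Cmax : ℝ)
    (hCmax : Cmax = Finset.univ.sup' Finset.univ_nonempty
        (fun i : Fin k => Finset.univ.sup' Finset.univ_nonempty (fun j => C i j)))
    (hCpos : 0 < Cmax)
    (δ ε : ℝ) (hδ : 0 < δ) (hε : ε = δ / (2 * Cmax))
    (OPT : ℝ)
    (hOPT : IsLeast {c : ℝ | ∃ X : Matrix (Fin k) (Fin ℓ) ℝ,
        (∀ i j, 0 ≤ X i j) ∧ (∀ i, ∑ j, X i j * p j = q i) ∧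
        (∀ j, ∑ i, X i j = 1) ∧ c = ∑ i, ∑ j, C i j * X i j * p j} OPT)
    (X : Matrix (Fin k) (Fin ℓ) ℝ)
    (hXpos : ∀ i j, 0 ≤ X i j)
    (hXp : ∀ i, ∑ j, X i j * p j ≤ q i)
    (hXt : ∀ j, ∑ i, X i j ≤ 1)
    (hmass : 1 - ε ≤ ∑ i, ∑ j, X i j * p j)
    (hXcost : ∑ i, ∑ j, C i j * X i j * p j ≤ OPT + δ / 2) :
    ∃ U : Matrix (Fin k) (Fin ℓ) ℝ,
      (∀ i j, 0 ≤ U i j) ∧ (∀ i, ∑ j, U i j * p j = q i) ∧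
      (∀ j, ∑ i, U i j = 1) ∧
      ∑ i, ∑ j, C i j * U i j * p j ≤ OPT + δ := by
  classical
  set S : ℝ := ∑ i, ∑ j, X i j * p j with hS
  set s : Fin k → ℝ := fun i => q i - ∑ j, X i j * p j with hs
  set r : Fin ℓ → ℝ := fun j => 1 - ∑ i, X i j with hr
  have hs0 : ∀ i, 0 ≤ s i := fun i => sub_nonneg.2 (hXp i)
  have hr0 : ∀ j, 0 ≤ r j := fun j => sub_nonneg.2 (hXt j)
  have hsum_s : ∑ i, s i = 1 - S := by
    simp [hs, Finset.sum_sub_distrib, hq1, hS]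
  have hsum_r : ∑ j, r j * p j = 1 - S := by
    have h0 : ∑ j, (∑ i, X i j) * p j = S := by
      rw [hS, Finset.sum_comm]
      exact Finset.sum_congr rfl fun j _ => Finset.sum_mul _ _ _
    simp [hr, sub_mul, Finset.sum_sub_distrib, hp1, h0]
  have hm0 : 0 ≤ 1 - S := hsum_s ▸ Finset.sum_nonneg fun i _ => hs0 i
  have hmε : 1 - S ≤ ε := by linarith [hmass]
  have hCle : ∀ i j, C i j ≤ Cmax := by
    intro i j
    rw [hCmax]
    exact le_trans (Finset.le_sup' (fun j => C i j) (Finset.mem_univ j))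
      (Finset.le_sup'
        (fun i : Fin k => Finset.univ.sup' Finset.univ_nonempty (fun j => C i j))
        (Finset.mem_univ i))
  have hεC : Cmax * ε = δ / 2 := by
    rw [hε]; field_simp
  by_cases hm : 1 - S = 0
  · -- exact mass already; only columns with p j = 0 may be deficient
    have hsz : ∀ i, q i - ∑ j, X i j * p j = 0 := by
      intro i
      exact (Finset.sum_eq_zero_iff_of_nonneg (fun i _ => hs0 i)).1
        (by rw [hsum_s, hm]) i (Finset.mem_univ i)
    have hrpz : ∀ j, (1 - ∑ i, X i j) * p j = 0 := by
      intro j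
      exact (Finset.sum_eq_zero_iff_of_nonneg
        (fun j _ => mul_nonneg (hr0 j) (hp j))).1 (by rw [hsum_r, hm]) j (Finset.mem_univ j)
    refine ⟨fun i j => X i j + r j * (if i = 0 then 1 else 0), ?_, ?_, ?_, ?_⟩
    · intro i j
      have h1 : (0:ℝ) ≤ (if i = 0 then (1:ℝ) else 0) := by positivity
      exact add_nonneg (hXpos i j) (mul_nonneg (hr0 j) h1)
    · intro i
      have h1 : ∀ j, (X i j + r j * (if i = 0 then 1 else 0)) * p j = X i j * p j := by
        intro j
        by_cases h : i = 0
        · simp only [h, if_pos]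
          have := hrpz j
          simp only [hr]
          linear_combination hrpz j
        · simp [h]
      rw [Finset.sum_congr rfl fun j _ => h1 j]
      linarith [hsz i]
    · intro j
      rw [Finset.sum_add_distrib, ← Finset.mul_sum]
      simp [hr]
    · have h1 : ∀ i j, C i j * (X i j + r j * (if i = 0 then 1 else 0)) * p j
          = C i j * X i j * p j := by
        intro i j
        by_cases h : i = 0
        · subst h
          simp only [if_pos, hr]
          linear_combination C 0 j * hrpz j
        · simp [h]
      calc ∑ i, ∑ j, C i j * (X i j + r j * (if i = 0 then 1 else 0)) * p j
          = ∑ i, ∑ j, C i j * X i j * p j :=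
            Finset.sum_congr rfl fun i _ => Finset.sum_congr rfl fun j _ => h1 i j
        _ ≤ OPT + δ := by linarith
  · have hmpos : 0 < 1 - S := lt_of_le_of_ne hm0 (Ne.symm hm)
    refine ⟨fun i j => X i j + r j * (s i / (1 - S)), ?_, ?_, ?_, ?_⟩
    · intro i j
      exact add_nonneg (hXpos i j)
        (mul_nonneg (hr0 j) (div_nonneg (hs0 i) hm0))
    · intro i
      have h1 : ∑ j, (X i j + r j * (s i / (1 - S))) * p j
          = (∑ j, X i j * p j) + (s i / (1 - S)) * ∑ j, r j * p j := by
        rw [Finset.mul_sum, ← Finset.sum_add_distrib]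
        exact Finset.sum_congr rfl fun j _ => by ring
      rw [h1, hsum_r, div_mul_cancel₀ _ hm]
      simp [hs]
    · intro j
      have h1 : ∑ i, (X i j + r j * (s i / (1 - S)))
          = (∑ i, X i j) + r j * ((∑ i, s i) / (1 - S)) := by
        rw [Finset.sum_add_distrib, Finset.sum_div, Finset.mul_sum]
      rw [h1, hsum_s, div_self hm]
      simp [hr]
    · have hsplit : ∑ i, ∑ j, C i j * (X i j + r j * (s i / (1 - S))) * p j
          = (∑ i, ∑ j, C i j * X i j * p j)
            + ∑ i, ∑ j, C i j * (r j * (s i / (1 - S))) * p j := by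
        rw [← Finset.sum_add_distrib]
        refine Finset.sum_congr rfl fun i _ => ?_
        rw [← Finset.sum_add_distrib]
        exact Finset.sum_congr rfl fun j _ => by ring
      have h1 : ∑ i, ∑ j, C i j * (r j * (s i / (1 - S))) * p j
          ≤ ∑ i, ∑ j, Cmax * (r j * (s i / (1 - S))) * p j := by
        refine Finset.sum_le_sum fun i _ => Finset.sum_le_sum fun j _ => ?_
        have hnn : 0 ≤ (r j * (s i / (1 - S))) * p j :=
          mul_nonneg (mul_nonneg (hr0 j) (div_nonneg (hs0 i) hm0)) (hp j)
        calc C i j * (r j * (s i / (1 - S))) * p j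
            = C i j * ((r j * (s i / (1 - S))) * p j) := by ring
          _ ≤ Cmax * ((r j * (s i / (1 - S))) * p j) :=
              mul_le_mul_of_nonneg_right (hCle i j) hnn
          _ = Cmax * (r j * (s i / (1 - S))) * p j := by ring
      have h2 : ∑ i, ∑ j, Cmax * (r j * (s i / (1 - S))) * p j = Cmax * (1 - S) := by
        have hin : ∀ i : Fin k, ∑ j, Cmax * (r j * (s i / (1 - S))) * p j
            = Cmax / (1 - S) * s i * ∑ j, r j * p j := by
          intro i
          rw [Finset.mul_sum]
          exact Finset.sum_congr rfl fun j _ => by ring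
        calc ∑ i, ∑ j, Cmax * (r j * (s i / (1 - S))) * p j
            = ∑ i, Cmax / (1 - S) * s i * (1 - S) := by
              exact Finset.sum_congr rfl fun i _ => by rw [hin i, hsum_r]
          _ = ∑ i, Cmax * s i := Finset.sum_congr rfl fun i _ => by
              field_simp
          _ = Cmax * ∑ i, s i := (Finset.mul_sum _ _ _).symm
          _ = Cmax * (1 - S) := by rw [hsum_s]
      have hfinal : Cmax * (1 - S) ≤ δ / 2 :=
        le_of_le_of_eq (mul_le_mul_of_nonneg_left hmε (le_of_lt hCpos)) hεC
      rw [hsplit]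
      linarith [le_trans h1 (le_of_eq h2)]
end
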